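/- Assume Disc(q) ≠ 0, Det(q) ≠ 0 (so m ≠ 0). If (x1,y1), (x2,y2), (x3,y3) are rational points on the conic q(x,y) = 0, then [x1,y1]_q · ([x2,y2]_q)⁻¹ · [x3,y3]_q is again of the form [x,y]_q for some rational point (x,y) on q(x,y) = 0. -/
import Mathlib

set_option maxHeartbeats 1000000

/-- The matrix `[x,y]_q`. -/
def Mq (a b c h k x y : ℚ) : Matrix (Fin 2) (Fin 2) ℚ :=
  !![x - h, -c * (y - k); y - k, a * (x - h) + b * (y - k)]

/-- For rational points on the conic `q = 0` (with `Disc(q) ≠ 0` and `Det(q) ≠ 0`),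
the matrix product `[P]_q · [Q]_q⁻¹ · [R]_q` is again `[x,y]_q` for a rational point
`(x,y)` on the conic. -/
theorem conic_matrix_triple_product (a b c d e f h k x1 y1 x2 y2 x3 y3 : ℚ)
    (hDisc : a * c - b ^ 2 / 4 ≠ 0)
    (hDet : Matrix.det !![a, b / 2, d / 2; b / 2, c, e / 2; d / 2, e / 2, f] ≠ 0)
    (hh : h = (b / 2 * (e / 2) - c * (d / 2)) / (a * c - b ^ 2 / 4))
    (hk : k = -(a * (e / 2) - b / 2 * (d / 2)) / (a * c - b ^ 2 / 4))
    (h1 : a * x1 ^ 2 + b * x1 * y1 + c * y1 ^ 2 + d * x1 + e * y1 + f = 0)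
    (h2 : a * x2 ^ 2 + b * x2 * y2 + c * y2 ^ 2 + d * x2 + e * y2 + f = 0)
    (h3 : a * x3 ^ 2 + b * x3 * y3 + c * y3 ^ 2 + d * x3 + e * y3 + f = 0) :
    ∃ x y : ℚ,
      a * x ^ 2 + b * x * y + c * y ^ 2 + d * x + e * y + f = 0 ∧
      Mq a b c h k x1 y1 * (Mq a b c h k x2 y2)⁻¹ * Mq a b c h k x3 y3 =
        Mq a b c h k x y := by
  have hh' : h * (a * c - b ^ 2 / 4) = b / 2 * (e / 2) - c * (d / 2) := by
    rw [hh, div_mul_cancel₀ _ hDisc]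
  have hk' : k * (a * c - b ^ 2 / 4) = -(a * (e / 2) - b / 2 * (d / 2)) := by
    rw [hk, div_mul_cancel₀ _ hDisc]
  -- center equations
  have hc1 : 2 * a * h + b * k + d = 0 := by
    have h0 : (2 * a * h + b * k + d) * (a * c - b ^ 2 / 4) = 0 := by
      linear_combination (2 * a) * hh' + b * hk'
    rcases mul_eq_zero.mp h0 with h' | h'
    · exact h'
    · exact absurd h' hDisc
  have hc2 : b * h + 2 * c * k + e = 0 := by
    have h0 : (b * h + 2 * c * k + e) * (a * c - b ^ 2 / 4) = 0 := by
      linear_combination b * hh' + (2 * c) * hk'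
    rcases mul_eq_zero.mp h0 with h' | h'
    · exact h'
    · exact absurd h' hDisc
  have hDet' : a * c * f - a * (e / 2) * (e / 2) - b / 2 * (b / 2) * f +
      b / 2 * (e / 2) * (d / 2) + d / 2 * (b / 2) * (e / 2) - d / 2 * c * (d / 2) ≠ 0 := by
    rw [Matrix.det_fin_three] at hDet
    simpa using hDet
  set m : ℚ := -(a * h ^ 2 + b * h * k + c * k ^ 2 + d * h + e * k + f) with hm
  clear_value m
  have hm0 : m ≠ 0 := by
    intro hz
    have hq0 : a * h ^ 2 + b * h * k + c * k ^ 2 + d * h + e * k + f = 0 := by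
      have := hm.symm.trans hz
      linarith
    have key : (a * h ^ 2 + b * h * k + c * k ^ 2 + d * h + e * k + f) *
        (a * c - b ^ 2 / 4) ^ 2 =
        (a * c * f - a * (e / 2) * (e / 2) - b / 2 * (b / 2) * f +
          b / 2 * (e / 2) * (d / 2) + d / 2 * (b / 2) * (e / 2) - d / 2 * c * (d / 2)) *
        (a * c - b ^ 2 / 4) := by
      linear_combination
        (a * (h * (a * c - b ^ 2 / 4) + (b / 2 * (e / 2) - c * (d / 2))) +
          b * k * (a * c - b ^ 2 / 4) + d * (a * c - b ^ 2 / 4)) * hh' +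
        (b * (b / 2 * (e / 2) - c * (d / 2)) +
          c * (k * (a * c - b ^ 2 / 4) + -(a * (e / 2) - b / 2 * (d / 2))) +
          e * (a * c - b ^ 2 / 4)) * hk'
    rw [hq0, zero_mul] at key
    rcases mul_eq_zero.mp key.symm with h' | h'
    · exact hDet' h'
    · exact hDisc h'
  -- determinant facts
  have hq1 : a * (x1 - h) ^ 2 + b * (x1 - h) * (y1 - k) + c * (y1 - k) ^ 2 = m := by
    rw [hm]; linear_combination h1 - (x1 - h) * hc1 - (y1 - k) * hc2
  have hq2 : a * (x2 - h) ^ 2 + b * (x2 - h) * (y2 - k) + c * (y2 - k) ^ 2 = m := by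
    rw [hm]; linear_combination h2 - (x2 - h) * hc1 - (y2 - k) * hc2
  have hq3 : a * (x3 - h) ^ 2 + b * (x3 - h) * (y3 - k) + c * (y3 - k) ^ 2 = m := by
    rw [hm]; linear_combination h3 - (x3 - h) * hc1 - (y3 - k) * hc2
  set X1 := x1 - h with hX1
  set Y1 := y1 - k with hY1
  set X2 := x2 - h with hX2
  set Y2 := y2 - k with hY2
  set X3 := x3 - h with hX3
  set Y3 := y3 - k with hY3
  set s : ℚ := a * X1 * X2 + b * X1 * Y2 + c * Y1 * Y2 with hs
  set v : ℚ := X1 * Y2 - X2 * Y1 with hv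
  set X : ℚ := s * X3 + c * v * Y3 with hX
  set Y : ℚ := s * Y3 - v * (a * X3 + b * Y3) with hY
  clear_value X1 Y1 X2 Y2 X3 Y3 s v X Y
  have hnorm : a * X ^ 2 + b * X * Y + c * Y ^ 2 = m ^ 3 := by
    have hid : a * X ^ 2 + b * X * Y + c * Y ^ 2 =
        (a * X1 ^ 2 + b * X1 * Y1 + c * Y1 ^ 2) * (a * X2 ^ 2 + b * X2 * Y2 + c * Y2 ^ 2) *
          (a * X3 ^ 2 + b * X3 * Y3 + c * Y3 ^ 2) := by
      rw [hX, hY, hs, hv]; ring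
    rw [hid, hq1, hq2, hq3]; ring
  have hdet2 : (Mq a b c h k x2 y2).det = m := by
    rw [Mq, Matrix.det_fin_two_of]
    linear_combination h2 - (x2 - h) * hc1 - (y2 - k) * hc2 - hm
  have hinv : (Mq a b c h k x2 y2)⁻¹ =
      m⁻¹ • !![a * X2 + b * Y2, c * Y2; -Y2, X2] := by
    rw [Matrix.inv_def, hdet2, Ring.inverse_eq_inv']
    congr 1
    rw [Mq, Matrix.adjugate_fin_two_of]
    rw [hX2, hY2]
    congr 1 <;> ring_nf
  refine ⟨h + X / m, k + Y / m, ?_, ?_⟩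
  · have expand : a * (h + X / m) ^ 2 + b * (h + X / m) * (k + Y / m) + c * (k + Y / m) ^ 2 +
        d * (h + X / m) + e * (k + Y / m) + f =
        (a * X ^ 2 + b * X * Y + c * Y ^ 2) / m ^ 2 +
          (X / m) * (2 * a * h + b * k + d) + (Y / m) * (b * h + 2 * c * k + e) +
          (a * h ^ 2 + b * h * k + c * k ^ 2 + d * h + e * k + f) := by
      field_simp
      ring
    rw [expand, hnorm, hc1, hc2]
    have hqhk : a * h ^ 2 + b * h * k + c * k ^ 2 + d * h + e * k + f = -m := by
      linarith [hm]
    rw [hqhk]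
    field_simp
    ring
  · rw [hinv]
    rw [Matrix.mul_smul, Matrix.smul_mul]
    rw [Mq, Mq, Mq]
    rw [← hX1, ← hY1, ← hX3, ← hY3]
    have e1 : h + X / m - h = X / m := by ring
    have e2 : k + Y / m - k = Y / m := by ring
    rw [e1, e2]
    ext i j
    fin_cases i <;> fin_cases j <;>
      simp [Matrix.mul_apply, Fin.sum_univ_two, Matrix.smul_apply] <;>
      simp only [hX, hY, hs, hv] <;> field_simp <;> ring
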